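/- Minimal hitting set duality for explanations: for a classifier τ on a finite product feature space with instance v and τ(v)=c, a set X is a (subset-minimal) abductive explanation if and only if X is a minimal hitting set of the set of all contrastive explanations; dually, every minimal contrastive explanation is a minimal hitting set of the set of all abductive explanations. -/

import Mathlib

variable {m : ℕ} {D : Fin m → Type} {K : Type}

/-- Weak abductive explanation. -/
def WAXp (τ : (∀ i, D i) → K) (v : ∀ i, D i) (c : K) (X : Finset (Fin m)) : Prop :=
  ∀ x : ∀ i, D i, (∀ i ∈ X, x i = v i) → τ x = c

/-- Weak contrastive explanation. -/
def WCXp (τ : (∀ i, D i) → K) (v : ∀ i, D i) (c : K) (Y : Finset (Fin m)) : Prop :=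
  ∃ x : ∀ i, D i, (∀ i ∉ Y, x i = v i) ∧ τ x ≠ c

/-- Subset-minimal set satisfying a property. -/
def SubsetMinimalFor (P : Finset (Fin m) → Prop) (X : Finset (Fin m)) : Prop :=
  P X ∧ ∀ X' : Finset (Fin m), X' ⊂ X → ¬ P X'

/-- Hitting set of a family of sets. -/
def HittingSet (S : Set (Finset (Fin m))) (X : Finset (Fin m)) : Prop :=
  ∀ Y ∈ S, (X ∩ Y).Nonempty

lemma minimalFor_congr {P Q : Finset (Fin m) → Prop} (h : ∀ Z, P Z ↔ Q Z)
    (X : Finset (Fin m)) : SubsetMinimalFor P X ↔ SubsetMinimalFor Q X := by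
  unfold SubsetMinimalFor
  constructor
  · rintro ⟨h1, h2⟩
    exact ⟨(h X).mp h1, fun X' hX' hQ => h2 X' hX' ((h X').mpr hQ)⟩
  · rintro ⟨h1, h2⟩
    exact ⟨(h X).mpr h1, fun X' hX' hP => h2 X' hX' ((h X').mp hP)⟩

/-- Minimal hitting set duality between abductive and contrastive explanations:
AXps are exactly the minimal hitting sets of the family of (weak) CXps, and
CXps are exactly the minimal hitting sets of the family of (weak) AXps. -/
theorem axp_cxp_mhs_duality [∀ i, Fintype (D i)] [∀ i, Nonempty (D i)]
    (τ : (∀ i, D i) → K) (v : ∀ i, D i) (c : K) (hc : τ v = c) :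
    (∀ X : Finset (Fin m),
        SubsetMinimalFor (WAXp τ v c) X
          ↔ SubsetMinimalFor (HittingSet {Y | WCXp τ v c Y}) X)
    ∧ (∀ Y : Finset (Fin m),
        SubsetMinimalFor (WCXp τ v c) Y
          ↔ SubsetMinimalFor (HittingSet {X | WAXp τ v c X}) Y) := by
  have hmonoA : ∀ X X' : Finset (Fin m), X ⊆ X' → WAXp τ v c X → WAXp τ v c X' :=
    fun X X' hs h x hx => h x fun i hi => hx i (hs hi)
  have hmonoC : ∀ Y Y' : Finset (Fin m), Y ⊆ Y' → WCXp τ v c Y → WCXp τ v c Y' := by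
    rintro Y Y' hs ⟨x, hx, hne⟩
    exact ⟨x, fun i hi => hx i (fun h => hi (hs h)), hne⟩
  have hcompl : ∀ X : Finset (Fin m), WAXp τ v c X ↔ ¬ WCXp τ v c Xᶜ := by
    intro X
    unfold WAXp WCXp
    push_neg
    simp only [Finset.mem_compl, not_not]
  have hA : ∀ X, WAXp τ v c X ↔ HittingSet {Y | WCXp τ v c Y} X := by
    intro X
    constructor
    · intro h Y hY
      by_contra hne
      rw [Finset.not_nonempty_iff_eq_empty] at hne
      apply (hcompl X).mp h
      apply hmonoC Y Xᶜ _ hY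
      intro i hi
      rw [Finset.mem_compl]
      intro hiX
      have : i ∈ X ∩ Y := Finset.mem_inter.mpr ⟨hiX, hi⟩
      rw [hne] at this
      exact absurd this (Finset.notMem_empty i)
    · intro h
      rw [hcompl]
      intro hC
      obtain ⟨i, hi⟩ := h Xᶜ hC
      rw [Finset.mem_inter, Finset.mem_compl] at hi
      exact hi.2 hi.1
  have hC : ∀ Y, WCXp τ v c Y ↔ HittingSet {X | WAXp τ v c X} Y := by
    intro Y
    constructor
    · intro h X hX
      by_contra hne
      rw [Finset.not_nonempty_iff_eq_empty] at hne
      have hsub : X ⊆ Yᶜ := by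
        intro i hi
        rw [Finset.mem_compl]
        intro hiY
        have : i ∈ Y ∩ X := Finset.mem_inter.mpr ⟨hiY, hi⟩
        rw [hne] at this
        exact absurd this (Finset.notMem_empty i)
      have hAY : WAXp τ v c Yᶜ := hmonoA X Yᶜ hsub hX
      have := (hcompl Yᶜ).mp hAY
      rw [compl_compl] at this
      exact this h
    · intro h
      by_contra hCY
      have hAY : WAXp τ v c Yᶜ := (hcompl Yᶜ).mpr (by rwa [compl_compl])
      obtain ⟨i, hi⟩ := h Yᶜ hAY
      rw [Finset.mem_inter, Finset.mem_compl] at hi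
      exact hi.2 hi.1
  exact ⟨fun X => minimalFor_congr hA X, fun Y => minimalFor_congr hC Y⟩
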